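/- Let A be a strictly positive operator on H, B = diag(A,A), and X, Y ∈ B_A(H). Then w_B([[X,Y],[Y,X]]) = max{w_A(X+Y), w_A(X−Y)}. In particular, w_B([[0,Y],[Y,0]]) = w_A(Y). -/

import Mathlib

set_option linter.unusedSectionVars false
set_option linter.unusedVariables false
set_option maxHeartbeats 1000000

noncomputable section
open Complex ContinuousLinearMap

variable {H : Type*} [NormedAddCommGroup H] [InnerProductSpace ℂ H] [CompleteSpace H]

/-- The `A`-inner product `⟨x,y⟩_A = ⟨Ax,y⟩`. -/
def innA (A : H →L[ℂ] H) (x y : H) : ℂ := inner ℂ (A x) y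

/-- The `A`-seminorm of a vector, `‖x‖_A = √⟨x,x⟩_A`. -/
def vnormA (A : H →L[ℂ] H) (x : H) : ℝ := Real.sqrt (innA A x x).re

/-- The `A`-numerical radius `w_A(T) = sup{|⟨Tx,x⟩_A| : ‖x‖_A = 1}`. -/
def wA (A T : H →L[ℂ] H) : ℝ :=
  sSup {r : ℝ | ∃ x : H, vnormA A x = 1 ∧ r = ‖innA A (T x) x‖}

/-- The `A`-operator seminorm, `sup` over `A`-unit vectors in the closure of the range of `A`. -/
def opNormA (A T : H →L[ℂ] H) : ℝ :=
  sSup {r : ℝ | ∃ x : H, x ∈ closure (Set.range A) ∧ vnormA A x = 1 ∧ r = vnormA A (T x)}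

/-- The `A`-operator seminorm, `sup` over all `A`-unit vectors (used when `A > 0`). -/
def opNormA' (A T : H →L[ℂ] H) : ℝ :=
  sSup {r : ℝ | ∃ x : H, vnormA A x = 1 ∧ r = vnormA A (T x)}

/-- The `A`-Crawford number `c_A(T) = inf{|⟨Tx,x⟩_A| : ‖x‖_A = 1}`. -/
def cA (A T : H →L[ℂ] H) : ℝ :=
  sInf {r : ℝ | ∃ x : H, vnormA A x = 1 ∧ r = ‖innA A (T x) x‖}

/-- The `A`-minimum modulus `m_A(T) = inf{‖Tx‖_A : ‖x‖_A = 1}` (version for `A > 0`). -/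
def mA (A T : H →L[ℂ] H) : ℝ :=
  sInf {r : ℝ | ∃ x : H, vnormA A x = 1 ∧ r = vnormA A (T x)}

/-- `S` is an `A`-adjoint of `T`, i.e. `A S = T* A`. -/
def IsAAdjoint (A T S : H →L[ℂ] H) : Prop :=
  A.comp S = (ContinuousLinearMap.adjoint T).comp A

/-- `A` is strictly positive: positive and `⟨Ax,x⟩ > 0` for all `x ≠ 0`. -/
def StrictPos (A : H →L[ℂ] H) : Prop :=
  A.IsPositive ∧ ∀ x : H, x ≠ 0 → 0 < (innA A x x).re

/-- The inner product on `H ⊕ H`. -/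
def inn2 (u v : H × H) : ℂ := inner ℂ u.1 v.1 + inner ℂ u.2 v.2

/-- `B = diag(A, A)` acting on `H ⊕ H`. -/
def Bop (A : H →L[ℂ] H) : H × H →L[ℂ] H × H := A.prodMap A

/-- The `B`-seminorm on `H ⊕ H`. -/
def vnormB (A : H →L[ℂ] H) (u : H × H) : ℝ := Real.sqrt (inn2 (Bop A u) u).re

/-- The `B`-numerical radius on `H ⊕ H`, where `B = diag(A, A)`. -/
def wB (A : H →L[ℂ] H) (S : H × H →L[ℂ] H × H) : ℝ :=
  sSup {r : ℝ | ∃ u : H × H, vnormB A u = 1 ∧ r = ‖inn2 (Bop A (S u)) u‖}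

/-- The `2 × 2` operator matrix `[[X, Y], [Z, W]]` acting on `H ⊕ H`. -/
def blk (X Y Z W : H →L[ℂ] H) : H × H →L[ℂ] H × H :=
  ((X.comp (ContinuousLinearMap.fst ℂ H H)) + (Y.comp (ContinuousLinearMap.snd ℂ H H))).prod
    ((Z.comp (ContinuousLinearMap.fst ℂ H H)) + (W.comp (ContinuousLinearMap.snd ℂ H H)))

/-! ### Auxiliary lemmas -/

theorem innA_conj (A : H →L[ℂ] H) (hA : A.IsPositive) (u v : H) :
    (starRingEnd ℂ) (innA A v u) = innA A u v := by
  simp only [innA]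
  rw [inner_conj_symm]
  exact (hA.1 u v).symm

theorem innA_cs (A : H →L[ℂ] H) (hA : A.IsPositive) (x y : H) :
    ‖innA A x y‖ ≤ vnormA A x * vnormA A y := by
  have key := @InnerProductSpace.Core.inner_mul_inner_self_le ℂ H _ _ _
    { inner := fun u v => innA A u v
      conj_inner_symm := innA_conj A hA
      re_inner_nonneg := fun u => hA.2 u
      add_left := by intro u v w; simp [innA, inner_add_left]
      smul_left := by intro u v r; simp [innA, inner_smul_left]; ring } x y
  have key' : ‖innA A x y‖ * ‖innA A y x‖ ≤ (innA A x x).re * (innA A y y).re := key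
  have h2 : ‖innA A y x‖ = ‖innA A x y‖ := by
    rw [← innA_conj A hA x y, Complex.norm_conj]
  have key2 : ‖innA A x y‖ ^ 2 ≤ (innA A x x).re * (innA A y y).re := by
    rw [h2] at key'; nlinarith [norm_nonneg (innA A x y)]
  have hx0 : 0 ≤ (innA A x x).re := hA.2 x
  have h3 := Real.sqrt_le_sqrt key2
  rw [Real.sqrt_sq (norm_nonneg _), Real.sqrt_mul hx0] at h3
  exact h3

theorem vnormA_nonneg (A : H →L[ℂ] H) (x : H) : 0 ≤ vnormA A x := Real.sqrt_nonneg _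

theorem sq_vnormA (A : H →L[ℂ] H) (hA : A.IsPositive) (x : H) :
    vnormA A x ^ 2 = (innA A x x).re := Real.sq_sqrt (hA.2 x)

theorem isAAdjoint_symm {A T S : H →L[ℂ] H} (hA : A.IsPositive) (h : IsAAdjoint A T S) :
    IsAAdjoint A S T := by
  have h2 := congrArg ContinuousLinearMap.adjoint h
  rw [ContinuousLinearMap.adjoint_comp, ContinuousLinearMap.adjoint_comp,
    ContinuousLinearMap.adjoint_adjoint, hA.isSelfAdjoint.adjoint_eq] at h2
  exact h2.symm

theorem isAAdjoint_comp_self {A T S : H →L[ℂ] H} (hA : A.IsPositive) (h : IsAAdjoint A T S) :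
    IsAAdjoint A (S.comp T) (S.comp T) := by
  have h' := isAAdjoint_symm hA h
  unfold IsAAdjoint at *
  rw [ContinuousLinearMap.adjoint_comp]
  calc A.comp (S.comp T) = (A.comp S).comp T := by rw [ContinuousLinearMap.comp_assoc]
  _ = ((adjoint T).comp A).comp T := by rw [h]
  _ = (adjoint T).comp (A.comp T) := by rw [ContinuousLinearMap.comp_assoc]
  _ = (adjoint T).comp ((adjoint S).comp A) := by rw [h']
  _ = ((adjoint T).comp (adjoint S)).comp A := by rw [ContinuousLinearMap.comp_assoc]

theorem step_ineq {A T S : H →L[ℂ] H} (hA : A.IsPositive) (h : IsAAdjoint A T S) (x : H) :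
    vnormA A (T x) ^ 2 ≤ vnormA A x * vnormA A (S (T x)) := by
  have h' := isAAdjoint_symm hA h
  have hATx : A (T x) = (adjoint S) (A x) := by
    have := congrArg (fun f : H →L[ℂ] H => f x) h'
    simpa using this
  have key : innA A (T x) (T x) = innA A x (S (T x)) := by
    show (inner ℂ (A (T x)) (T x) : ℂ) = innA A x (S (T x))
    rw [hATx, ContinuousLinearMap.adjoint_inner_left]
    rfl
  rw [sq_vnormA A hA, key]
  calc (innA A x (S (T x))).re ≤ ‖innA A x (S (T x))‖ := Complex.re_le_norm _
  _ ≤ vnormA A x * vnormA A (S (T x)) := innA_cs A hA x _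

theorem vnormA_le_norm (A : H →L[ℂ] H) (hA : A.IsPositive) (y : H) :
    vnormA A y ≤ Real.sqrt ‖A‖ * ‖y‖ := by
  have h1 : (innA A y y).re ≤ ‖A‖ * ‖y‖ ^ 2 := by
    calc (innA A y y).re ≤ ‖innA A y y‖ := Complex.re_le_norm _
    _ = ‖(inner ℂ (A y) y : ℂ)‖ := rfl
    _ ≤ ‖A y‖ * ‖y‖ := norm_inner_le_norm _ _
    _ ≤ (‖A‖ * ‖y‖) * ‖y‖ := by
        have := A.le_opNorm y
        nlinarith [norm_nonneg y, norm_nonneg (A y)]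
    _ = ‖A‖ * ‖y‖ ^ 2 := by ring
  have := Real.sqrt_le_sqrt h1
  rwa [Real.sqrt_mul (norm_nonneg A), Real.sqrt_sq (norm_nonneg y)] at this

def iterSq (R : H →L[ℂ] H) : ℕ → (H →L[ℂ] H)
  | 0 => R
  | n + 1 => (iterSq R n).comp (iterSq R n)

theorem iterSq_adj {A R : H →L[ℂ] H} (hA : A.IsPositive) (h : IsAAdjoint A R R) (n : ℕ) :
    IsAAdjoint A (iterSq R n) (iterSq R n) := by
  induction n with
  | zero => exact h
  | succ n ih => exact isAAdjoint_comp_self hA ih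

theorem iterSq_norm (R : H →L[ℂ] H) (n : ℕ) : ‖iterSq R n‖ ≤ ‖R‖ ^ (2 ^ n) := by
  induction n with
  | zero => simp [iterSq]
  | succ n ih =>
    calc ‖iterSq R (n+1)‖ ≤ ‖iterSq R n‖ * ‖iterSq R n‖ := ContinuousLinearMap.opNorm_comp_le _ _
    _ ≤ ‖R‖ ^ (2 ^ n) * ‖R‖ ^ (2 ^ n) := by
        apply mul_le_mul ih ih (norm_nonneg _) (by positivity)
    _ = ‖R‖ ^ (2 ^ (n+1)) := by rw [← pow_add]; congr 1; ring

theorem chain_ineq {A T S : H →L[ℂ] H} (hA : A.IsPositive) (h : IsAAdjoint A T S) (x : H)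
    (hx : 0 < vnormA A x) (n : ℕ) :
    vnormA A (T x) ^ (2 ^ (n + 1)) * vnormA A x ≤
      vnormA A x ^ (2 ^ (n + 1)) * vnormA A (iterSq (S.comp T) n x) := by
  induction n with
  | zero =>
    have h0 := step_ineq hA h x
    have : vnormA A (S (T x)) = vnormA A (iterSq (S.comp T) 0 x) := by
      simp [iterSq]
    rw [this] at h0
    have hh := hx.le
    have hmul := mul_le_mul_of_nonneg_right h0 hh
    norm_num
    nlinarith [vnormA_nonneg A (iterSq (S.comp T) 0 x)]
  | succ n ih =>
    set u := vnormA A (T x) with hu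
    set hN := vnormA A x with hhN
    set v := vnormA A (iterSq (S.comp T) n x) with hv
    set w := vnormA A (iterSq (S.comp T) (n + 1) x) with hw
    have hstep : v ^ 2 ≤ hN * w := by
      have := step_ineq hA (iterSq_adj hA (isAAdjoint_comp_self hA h) n) (x := x)
      have heq : vnormA A ((iterSq (S.comp T) n) ((iterSq (S.comp T) n) x)) = w := by
        rw [hw]; rfl
      rw [heq] at this
      exact this
    have hu0 : 0 ≤ u := vnormA_nonneg A _
    have hv0 : 0 ≤ v := vnormA_nonneg A _
    have hw0 : 0 ≤ w := vnormA_nonneg A _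
    have h2 : (u ^ (2 ^ (n+1)) * hN) ^ 2 ≤ (hN ^ (2 ^ (n+1)) * v) ^ 2 := by
      apply sq_le_sq' _ ih
      nlinarith [pow_nonneg hu0 (2^(n+1)), pow_nonneg (le_of_lt hx) (2^(n+1)), hx.le]
    have hexp : 2 ^ (n + 2) = 2 ^ (n+1) * 2 := by ring
    calc u ^ (2 ^ (n + 2)) * hN = (u ^ (2 ^ (n+1)) * hN) ^ 2 / hN := by
          rw [hexp, pow_mul]; field_simp
    _ ≤ (hN ^ (2 ^ (n+1)) * v) ^ 2 / hN := by gcongr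
    _ = hN ^ (2 ^ (n+1) * 2) * v ^ 2 / hN := by ring
    _ ≤ hN ^ (2 ^ (n+1) * 2) * (hN * w) / hN := by
          have hnn : (0:ℝ) ≤ hN ^ (2 ^ (n+1) * 2) := pow_nonneg hx.le _
          have : hN ^ (2 ^ (n+1) * 2) * v ^ 2 ≤ hN ^ (2 ^ (n+1) * 2) * (hN * w) := by nlinarith
          gcongr
    _ = hN ^ (2 ^ (n + 2)) * w := by rw [hexp]; field_simp

theorem aBound {A T S : H →L[ℂ] H} (hA : A.IsPositive)
    (hSP : ∀ y : H, y ≠ 0 → 0 < (innA A y y).re)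
    (h : IsAAdjoint A T S) (x : H) :
    vnormA A (T x) ≤ Real.sqrt (‖S‖ * ‖T‖) * vnormA A x := by
  by_cases hx : x = 0
  · subst hx
    simp only [map_zero]
    have : vnormA A (0 : H) = 0 := by simp [vnormA, innA]
    rw [this, mul_zero]
  have h0 : 0 < vnormA A x := Real.sqrt_pos.mpr (hSP x hx)
  set K := ‖S‖ * ‖T‖ with hKdef
  have hK : 0 ≤ K := by positivity
  set s := Real.sqrt K with hsdef
  set u := vnormA A (T x) with hudef
  set hN := vnormA A x with hNdef
  by_contra hcon
  push_neg at hcon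
  have hu0 : 0 < u := lt_of_le_of_lt (by positivity) hcon
  have hR : ‖S.comp T‖ ≤ K := ContinuousLinearMap.opNorm_comp_le _ _
  have vb : ∀ n : ℕ, vnormA A (iterSq (S.comp T) n x) ≤ Real.sqrt ‖A‖ * (K ^ (2 ^ n) * ‖x‖) := by
    intro n
    refine (vnormA_le_norm A hA _).trans ?_
    have h1 : ‖iterSq (S.comp T) n x‖ ≤ ‖iterSq (S.comp T) n‖ * ‖x‖ :=
      (iterSq (S.comp T) n).le_opNorm x
    have h2 : ‖iterSq (S.comp T) n‖ ≤ K ^ (2 ^ n) :=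
      (iterSq_norm _ n).trans (pow_le_pow_left₀ (norm_nonneg _) hR _)
    have h3 : ‖iterSq (S.comp T) n x‖ ≤ K ^ (2 ^ n) * ‖x‖ := by
      nlinarith [norm_nonneg x, norm_nonneg (iterSq (S.comp T) n x)]
    nlinarith [Real.sqrt_nonneg ‖A‖]
  by_cases hs : s = 0
  · have hKzero : K = 0 := Real.sqrt_eq_zero hK |>.mp hs
    have hv0 : vnormA A (iterSq (S.comp T) 0 x) ≤ 0 := by
      have := vb 0
      rw [hKzero] at this
      simpa using this
    have hc := chain_ineq hA h x h0 0
    have := vnormA_nonneg A (iterSq (S.comp T) 0 x)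
    have hveq : vnormA A (iterSq (S.comp T) 0 x) = 0 := le_antisymm hv0 this
    rw [hveq, mul_zero] at hc
    rw [← hudef, ← hNdef] at hc
    norm_num at hc
    nlinarith [mul_pos (pow_pos hu0 2) h0]
  have hs0 : 0 < s := lt_of_le_of_ne (Real.sqrt_nonneg _) (Ne.symm hs)
  set b := s * hN with hbdef
  have hb0 : 0 < b := mul_pos hs0 h0
  have hub : b < u := hcon
  set C := Real.sqrt ‖A‖ * ‖x‖ with hCdef
  have hC0 : 0 ≤ C := by positivity
  have key2 : ∀ n : ℕ, u ^ (2 ^ (n+1)) * hN ≤ b ^ (2 ^ (n+1)) * C := by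
    intro n
    have hc := chain_ineq hA h x h0 n
    have hsm : s ^ (2 ^ (n+1)) = K ^ (2 ^ n) := by
      have : (2:ℕ) ^ (n+1) = 2 * 2 ^ n := by ring
      rw [this, pow_mul, Real.sq_sqrt hK]
    have hbm : b ^ (2 ^ (n+1)) = K ^ (2 ^ n) * hN ^ (2 ^ (n+1)) := by
      rw [hbdef, mul_pow, hsm]
    rw [hbm]
    calc u ^ (2 ^ (n+1)) * hN ≤ hN ^ (2 ^ (n+1)) * vnormA A (iterSq (S.comp T) n x) := hc
    _ ≤ hN ^ (2 ^ (n+1)) * (Real.sqrt ‖A‖ * (K ^ (2 ^ n) * ‖x‖)) := by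
        apply mul_le_mul_of_nonneg_left (vb n) (pow_nonneg h0.le _)
    _ = K ^ (2 ^ n) * hN ^ (2 ^ (n+1)) * C := by rw [hCdef]; ring
  have hr1 : 1 < u / b := (one_lt_div hb0).mpr hub
  obtain ⟨N, hN2⟩ := pow_unbounded_of_one_lt (C / hN) hr1
  have hmono : (u / b) ^ N ≤ (u / b) ^ (2 ^ (N + 1)) := by
    apply pow_le_pow_right₀ hr1.le
    calc N ≤ 2 ^ N := (Nat.lt_two_pow_self).le
    _ ≤ 2 ^ (N + 1) := Nat.pow_le_pow_right (by norm_num) (Nat.le_succ N)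
  have hlt : C / hN < (u / b) ^ (2 ^ (N+1)) := lt_of_lt_of_le hN2 hmono
  rw [div_pow] at hlt
  rw [div_lt_div_iff₀ h0 (pow_pos hb0 _)] at hlt
  have := key2 N
  nlinarith [pow_pos hb0 (2 ^ (N+1)), pow_pos hu0 (2 ^ (N+1))]

theorem innA_smul (A : H →L[ℂ] H) (c : ℂ) (u v : H) :
    innA A (c • u) (c • v) = (Complex.normSq c : ℂ) * innA A u v := by
  simp only [innA, map_smul, inner_smul_left, inner_smul_right]
  rw [Complex.normSq_eq_conj_mul_self]
  ring

theorem vnormA_smul (A : H →L[ℂ] H) (c : ℂ) (x : H) :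
    vnormA A (c • x) = ‖c‖ * vnormA A x := by
  unfold vnormA
  rw [innA_smul]
  have h1 : ((Complex.normSq c : ℂ) * innA A x x).re = Complex.normSq c * (innA A x x).re := by
    simp [Complex.re_ofReal_mul]
  rw [h1, Real.sqrt_mul (Complex.normSq_nonneg c), Complex.norm_def]

theorem blk_apply (X Y Z W : H →L[ℂ] H) (u : H × H) :
    blk X Y Z W u = (X u.1 + Y u.2, Z u.1 + W u.2) := rfl

theorem inn2_Bop (A : H →L[ℂ] H) (v u : H × H) :
    inn2 (Bop A v) u = innA A v.1 u.1 + innA A v.2 u.2 := rfl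

theorem blk_val (A X Y : H →L[ℂ] H) (x y : H) :
    2 * inn2 (Bop A ((blk X Y Y X) (x, y))) (x, y) =
      innA A ((X + Y) (x + y)) (x + y) + innA A ((X - Y) (x - y)) (x - y) := by
  simp only [inn2, Bop, blk, innA, ContinuousLinearMap.add_apply, ContinuousLinearMap.sub_apply,
    ContinuousLinearMap.comp_apply, ContinuousLinearMap.prod_apply,
    ContinuousLinearMap.coe_prodMap', ContinuousLinearMap.coe_fst', ContinuousLinearMap.coe_snd',
    Prod.map_apply', Prod.map_fst, Prod.map_snd, map_add, map_sub, inner_add_left, inner_add_right, inner_sub_left, inner_sub_right]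
  ring

theorem parA (A : H →L[ℂ] H) (x y : H) :
    (innA A (x + y) (x + y)).re + (innA A (x - y) (x - y)).re
      = 2 * ((innA A x x).re + (innA A y y).re) := by
  have h : innA A (x + y) (x + y) + innA A (x - y) (x - y)
      = 2 * (innA A x x + innA A y y) := by
    simp only [innA, map_add, map_sub, inner_add_left, inner_add_right, inner_sub_left,
      inner_sub_right]
    ring
  have h2 := congrArg Complex.re h
  simp only [Complex.add_re, Complex.mul_re, Complex.re_ofNat, Complex.im_ofNat] at h2
  linarith [h2]


theorem vnormA_zero (A : H →L[ℂ] H) : vnormA A (0 : H) = 0 := by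
  simp [vnormA, innA]

theorem vnormB_eq (A : H →L[ℂ] H) (x y : H) :
    vnormB A (x, y) = Real.sqrt ((innA A x x).re + (innA A y y).re) := by
  unfold vnormB
  rw [inn2_Bop]
  simp [Complex.add_re]

theorem qA_nonneg {A : H →L[ℂ] H} (hA : A.IsPositive) (x : H) : 0 ≤ (innA A x x).re := hA.2 x

theorem exists_unit {A : H →L[ℂ] H} (hA : StrictPos A) {x0 : H} (hx0 : x0 ≠ 0) :
    ∃ e : H, vnormA A e = 1 := by
  have hv : 0 < vnormA A x0 := Real.sqrt_pos.mpr (hA.2 x0 hx0)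
  refine ⟨(((vnormA A x0)⁻¹ : ℝ) : ℂ) • x0, ?_⟩
  rw [vnormA_smul, Complex.norm_real, Real.norm_eq_abs, abs_of_pos (inv_pos.mpr hv)]
  field_simp

theorem abs_innA_le_wA (A T : H →L[ℂ] H) (hA : StrictPos A)
    (hbdd : BddAbove {r : ℝ | ∃ x : H, vnormA A x = 1 ∧ r = ‖innA A (T x) x‖})
    (p : H) :
    ‖innA A (T p) p‖ ≤ wA A T * (innA A p p).re := by
  by_cases hp : p = 0
  · subst hp
    simp [innA]
  · have hv0 : 0 < vnormA A p := Real.sqrt_pos.mpr (hA.2 p hp)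
    set v := vnormA A p with hv
    set c : ℂ := ((v⁻¹ : ℝ) : ℂ) with hc
    have hunit : vnormA A (c • p) = 1 := by
      rw [vnormA_smul, hc, Complex.norm_real, Real.norm_eq_abs, abs_of_pos (inv_pos.mpr hv0), ← hv]
      field_simp
    have hle : ‖innA A (T (c • p)) (c • p)‖ ≤ wA A T :=
      le_csSup hbdd ⟨c • p, hunit, rfl⟩
    have hns : ‖(Complex.normSq c : ℂ)‖ = v⁻¹ * v⁻¹ := by
      rw [hc, Complex.normSq_ofReal, Complex.norm_real, Real.norm_eq_abs]
      exact abs_of_nonneg (by positivity)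
    have hval : ‖innA A (T (c • p)) (c • p)‖
        = (v⁻¹ * v⁻¹) * ‖innA A (T p) p‖ := by
      rw [map_smul, innA_smul, norm_mul, hns]
    have hq : (innA A p p).re = v * v := by
      have := sq_vnormA A hA.1 p
      rw [← hv] at this
      nlinarith [this]
    have hle2 : (v⁻¹ * v⁻¹) * ‖innA A (T p) p‖ ≤ wA A T := by
      rw [← hval]; exact hle
    calc ‖innA A (T p) p‖
        = (v * v) * ((v⁻¹ * v⁻¹) * ‖innA A (T p) p‖) := by
          field_simp
    _ ≤ (v * v) * wA A T := mul_le_mul_of_nonneg_left hle2 (by positivity)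
    _ = wA A T * (innA A p p).re := by rw [hq]; ring

theorem innA_neg_neg (A : H →L[ℂ] H) (u v : H) : innA A (-u) (-v) = innA A u v := by
  simp [innA]

theorem wB_blk_eq (A X Y : H →L[ℂ] H) (hA : StrictPos A)
    (hX : ∃ S, IsAAdjoint A X S) (hY : ∃ S, IsAAdjoint A Y S) :
    wB A (blk X Y Y X) = max (wA A (X + Y)) (wA A (X - Y)) := by
  obtain ⟨SX, hSX⟩ := hX
  obtain ⟨SY, hSY⟩ := hY
  have hadd : IsAAdjoint A (X + Y) (SX + SY) := by
    unfold IsAAdjoint at *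
    rw [ContinuousLinearMap.comp_add, hSX, hSY, map_add, ContinuousLinearMap.add_comp]
  have hsub : IsAAdjoint A (X - Y) (SX - SY) := by
    unfold IsAAdjoint at *
    rw [ContinuousLinearMap.comp_sub, hSX, hSY, map_sub, ContinuousLinearMap.sub_comp]
  have bddP : BddAbove
      {r : ℝ | ∃ x : H, vnormA A x = 1 ∧ r = ‖innA A ((X + Y) x) x‖} := by
    refine ⟨Real.sqrt (‖SX + SY‖ * ‖X + Y‖), ?_⟩
    rintro r ⟨x, hx1, rfl⟩
    calc ‖innA A ((X + Y) x) x‖ ≤ vnormA A ((X + Y) x) * vnormA A x :=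
        innA_cs A hA.1 _ _
    _ ≤ (Real.sqrt (‖SX + SY‖ * ‖X + Y‖) * vnormA A x) * vnormA A x :=
        mul_le_mul_of_nonneg_right (aBound hA.1 hA.2 hadd x) (vnormA_nonneg A x)
    _ = Real.sqrt (‖SX + SY‖ * ‖X + Y‖) := by rw [hx1]; ring
  have bddM : BddAbove
      {r : ℝ | ∃ x : H, vnormA A x = 1 ∧ r = ‖innA A ((X - Y) x) x‖} := by
    refine ⟨Real.sqrt (‖SX - SY‖ * ‖X - Y‖), ?_⟩
    rintro r ⟨x, hx1, rfl⟩
    calc ‖innA A ((X - Y) x) x‖ ≤ vnormA A ((X - Y) x) * vnormA A x :=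
        innA_cs A hA.1 _ _
    _ ≤ (Real.sqrt (‖SX - SY‖ * ‖X - Y‖) * vnormA A x) * vnormA A x :=
        mul_le_mul_of_nonneg_right (aBound hA.1 hA.2 hsub x) (vnormA_nonneg A x)
    _ = Real.sqrt (‖SX - SY‖ * ‖X - Y‖) := by rw [hx1]; ring
  by_cases hH : ∀ z : H, z = 0
  · have e1 : {r : ℝ | ∃ x : H, vnormA A x = 1 ∧ r = ‖innA A ((X + Y) x) x‖} = ∅ := by
      ext r
      simp only [Set.mem_setOf_eq, Set.mem_empty_iff_false, iff_false, not_exists]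
      rintro x ⟨hx1, -⟩
      rw [hH x, vnormA_zero] at hx1
      exact one_ne_zero hx1.symm
    have e2 : {r : ℝ | ∃ x : H, vnormA A x = 1 ∧ r = ‖innA A ((X - Y) x) x‖} = ∅ := by
      ext r
      simp only [Set.mem_setOf_eq, Set.mem_empty_iff_false, iff_false, not_exists]
      rintro x ⟨hx1, -⟩
      rw [hH x, vnormA_zero] at hx1
      exact one_ne_zero hx1.symm
    have e3 : {r : ℝ | ∃ u : H × H, vnormB A u = 1 ∧
        r = ‖inn2 (Bop A ((blk X Y Y X) u)) u‖} = ∅ := by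
      ext r
      simp only [Set.mem_setOf_eq, Set.mem_empty_iff_false, iff_false, not_exists]
      rintro ⟨x, y⟩ ⟨hu1, -⟩
      rw [show ((x, y) : H × H) = (0, 0) by rw [hH x, hH y]] at hu1
      rw [vnormB_eq] at hu1
      simp only [innA] at hu1
      simp [map_zero, inner_zero_right] at hu1
    unfold wB wA
    rw [e1, e2, e3, Real.sSup_empty]
    simp
  · push_neg at hH
    obtain ⟨x0, hx0⟩ := hH
    obtain ⟨e, he⟩ := exists_unit hA hx0
    -- embedding of the plus set
    have inclP : ∀ x : H, vnormA A x = 1 →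
        ∃ u : H × H, vnormB A u = 1 ∧
          ‖innA A ((X + Y) x) x‖ = ‖inn2 (Bop A ((blk X Y Y X) u)) u‖ := by
      intro x hx1
      set t : ℝ := (Real.sqrt 2)⁻¹ with ht
      set c : ℂ := (t : ℂ) with hc
      have ht2 : t * t = 1 / 2 := by
        rw [ht, ← mul_inv, Real.mul_self_sqrt (by norm_num : (0:ℝ) ≤ 2)]
        norm_num
      have hq : (innA A x x).re = 1 := by
        have := sq_vnormA A hA.1 x
        rw [hx1] at this
        nlinarith [this]
      have hns : Complex.normSq c = 1 / 2 := by
        rw [hc, Complex.normSq_ofReal, ht2]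
      refine ⟨(c • x, c • x), ?_, ?_⟩
      · rw [vnormB_eq]
        rw [innA_smul, hns]
        rw [Complex.re_ofReal_mul, hq]
        norm_num
      · have hid := blk_val A X Y (c • x) (c • x)
        have hzero : c • x - c • x = (0 : H) := sub_self _
        rw [hzero] at hid
        have hz : innA A ((X - Y) (0 : H)) (0 : H) = 0 := by simp [innA]
        rw [hz, add_zero] at hid
        have hcc : c • x + c • x = (c + c) • x := (add_smul c c x).symm
        rw [hcc] at hid
        have hns2 : Complex.normSq (c + c) = 2 := by
          rw [hc]
          rw [show ((t : ℂ) + (t : ℂ)) = (((t + t : ℝ)) : ℂ) by push_cast; ring]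
          rw [Complex.normSq_ofReal]
          nlinarith [ht2]
        have hval : innA A ((X + Y) ((c + c) • x)) ((c + c) • x)
            = (2 : ℂ) * innA A ((X + Y) x) x := by
          rw [map_smul, innA_smul, hns2]
          norm_num
        rw [hval] at hid
        have := mul_left_cancel₀ (two_ne_zero' ℂ) hid
        rw [this]
    -- embedding of the minus set
    have inclM : ∀ x : H, vnormA A x = 1 →
        ∃ u : H × H, vnormB A u = 1 ∧
          ‖innA A ((X - Y) x) x‖ = ‖inn2 (Bop A ((blk X Y Y X) u)) u‖ := by
      intro x hx1
      set t : ℝ := (Real.sqrt 2)⁻¹ with ht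
      set c : ℂ := (t : ℂ) with hc
      have ht2 : t * t = 1 / 2 := by
        rw [ht, ← mul_inv, Real.mul_self_sqrt (by norm_num : (0:ℝ) ≤ 2)]
        norm_num
      have hq : (innA A x x).re = 1 := by
        have := sq_vnormA A hA.1 x
        rw [hx1] at this
        nlinarith [this]
      have hns : Complex.normSq c = 1 / 2 := by
        rw [hc, Complex.normSq_ofReal, ht2]
      refine ⟨(c • x, -(c • x)), ?_, ?_⟩
      · rw [vnormB_eq]
        rw [innA_neg_neg, innA_smul, hns]
        rw [Complex.re_ofReal_mul, hq]
        norm_num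
      · have hid := blk_val A X Y (c • x) (-(c • x))
        have hzero : c • x + -(c • x) = (0 : H) := add_neg_cancel _
        rw [hzero] at hid
        have hz : innA A ((X + Y) (0 : H)) (0 : H) = 0 := by simp [innA]
        rw [hz, zero_add] at hid
        have hcc : c • x - -(c • x) = (c + c) • x := by
          rw [sub_neg_eq_add, ← add_smul]
        rw [hcc] at hid
        have hns2 : Complex.normSq (c + c) = 2 := by
          rw [hc]
          rw [show ((t : ℂ) + (t : ℂ)) = (((t + t : ℝ)) : ℂ) by push_cast; ring]
          rw [Complex.normSq_ofReal]
          nlinarith [ht2]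
        have hval : innA A ((X - Y) ((c + c) • x)) ((c + c) • x)
            = (2 : ℂ) * innA A ((X - Y) x) x := by
          rw [map_smul, innA_smul, hns2]
          norm_num
        rw [hval] at hid
        have := mul_left_cancel₀ (two_ne_zero' ℂ) hid
        rw [this]
    unfold wB wA
    set Sp := {r : ℝ | ∃ x : H, vnormA A x = 1 ∧ r = ‖innA A ((X + Y) x) x‖}
      with hSp
    set Sm := {r : ℝ | ∃ x : H, vnormA A x = 1 ∧ r = ‖innA A ((X - Y) x) x‖}
      with hSm
    set SB := {r : ℝ | ∃ u : H × H, vnormB A u = 1 ∧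
        r = ‖inn2 (Bop A ((blk X Y Y X) u)) u‖} with hSBdef
    set m := max (sSup Sp) (sSup Sm) with hm
    have hm1 : wA A (X + Y) = sSup Sp := rfl
    have hm2 : wA A (X - Y) = sSup Sm := rfl
    have hub : ∀ r ∈ SB, r ≤ m := by
      rintro r ⟨⟨x, y⟩, hu1, rfl⟩
      have hsum : (innA A x x).re + (innA A y y).re = 1 := by
        rw [vnormB_eq] at hu1
        have hnn : 0 ≤ (innA A x x).re + (innA A y y).re :=
          add_nonneg (qA_nonneg hA.1 x) (qA_nonneg hA.1 y)
        nlinarith [Real.sq_sqrt hnn, hu1]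
      have hid := blk_val A X Y x y
      have h1 := abs_innA_le_wA A (X + Y) hA bddP (x + y)
      have h2 := abs_innA_le_wA A (X - Y) hA bddM (x - y)
      rw [hm1] at h1
      rw [hm2] at h2
      have hpar := parA A x y
      have htri := norm_add_le (innA A ((X + Y) (x + y)) (x + y))
        (innA A ((X - Y) (x - y)) (x - y))
      have habs2 : ‖2 * inn2 (Bop A ((blk X Y Y X) (x, y))) (x, y)‖
          = 2 * ‖inn2 (Bop A ((blk X Y Y X) (x, y))) (x, y)‖ := by
        rw [norm_mul]
        norm_num
      rw [hid] at habs2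
      have hq1 : 0 ≤ (innA A (x + y) (x + y)).re := qA_nonneg hA.1 _
      have hq2 : 0 ≤ (innA A (x - y) (x - y)).re := qA_nonneg hA.1 _
      have hp1 : sSup Sp ≤ m := le_max_left _ _
      have hp2 : sSup Sm ≤ m := le_max_right _ _
      have hqq : (innA A (x + y) (x + y)).re + (innA A (x - y) (x - y)).re = 2 := by
        rw [hpar, hsum]; norm_num
      have hh1 := mul_le_mul_of_nonneg_right hp1 hq1
      have hh2 := mul_le_mul_of_nonneg_right hp2 hq2
      have h2m : m * ((innA A (x + y) (x + y)).re + (innA A (x - y) (x - y)).re) = 2 * m := by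
        rw [hqq]; ring
      nlinarith [htri, habs2, h1, h2, hh1, hh2, h2m]
    have hSpne : Sp.Nonempty := ⟨_, e, he, rfl⟩
    have hSmne : Sm.Nonempty := ⟨_, e, he, rfl⟩
    have hSBne : SB.Nonempty := by
      obtain ⟨u, hu1, hu2⟩ := inclP e he
      exact ⟨_, u, hu1, hu2⟩
    have bddSB : BddAbove SB := ⟨m, hub⟩
    apply le_antisymm
    · exact csSup_le hSBne hub
    · apply max_le
      · apply csSup_le_csSup bddSB hSpne
        rintro r ⟨x, hx1, rfl⟩
        obtain ⟨u, hu1, heq⟩ := inclP x hx1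
        exact ⟨u, hu1, heq⟩
      · apply csSup_le_csSup bddSB hSmne
        rintro r ⟨x, hx1, rfl⟩
        obtain ⟨u, hu1, heq⟩ := inclM x hx1
        exact ⟨u, hu1, heq⟩

theorem stmt6 (A X Y : H →L[ℂ] H) (hA : StrictPos A)
    (hX : ∃ S, IsAAdjoint A X S) (hY : ∃ S, IsAAdjoint A Y S) :
    wB A (blk X Y Y X) = max (wA A (X + Y)) (wA A (X - Y)) ∧
    wB A (blk 0 Y Y 0) = wA A Y := by
  constructor
  · exact wB_blk_eq A X Y hA hX hY
  · have hX0 : ∃ S, IsAAdjoint A (0 : H →L[ℂ] H) S := by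
      refine ⟨0, ?_⟩
      unfold IsAAdjoint
      simp
    have h := wB_blk_eq A 0 Y hA hX0 hY
    rw [zero_add, zero_sub] at h
    have hneg : wA A (-Y) = wA A Y := by
      unfold wA
      congr 1
      ext r
      constructor
      · rintro ⟨x, hx1, rfl⟩
        refine ⟨x, hx1, ?_⟩
        simp [innA, ContinuousLinearMap.neg_apply, inner_neg_left]
      · rintro ⟨x, hx1, rfl⟩
        refine ⟨x, hx1, ?_⟩
        simp [innA, ContinuousLinearMap.neg_apply, inner_neg_left]
    rw [hneg, max_self] at h
    exact h
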